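/- arXiv:2508.10612 — 2 statements merged into one kernel-verified Lean document; each statement's English description precedes it below -/
import Mathlib

section
/- Let d ≥ 1, p ∈ (1,∞), and let φ, f₀ ∈ L^p ∩ P. Then for every fixed ν > 0, the convolution φ_ν * f₀, defined by (φ_ν * f₀)(x) = ∫_{ℝ^d} φ_ν(x − y) f₀(y) dy, belongs to the closure of co(P_{φ,ν}) with respect to the L^p(ℝ^d) norm. -/
open MeasureTheory ENNReal

noncomputable section

/-- `ℝ^d` with the Euclidean norm and Lebesgue measure. -/
abbrev Euc (d : ℕ) := EuclideanSpace ℝ (Fin d)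

/-- A probability density function on `ℝ^d`. -/
def IsPDF {d : ℕ} (f : Euc d → ℝ) : Prop :=
  Measurable f ∧ (∀ x, 0 ≤ f x) ∧ ∫⁻ x, ENNReal.ofReal (f x) = 1

/-- The dilation `φ_ν(x) = ν^d φ(ν x)`. -/
def dilate {d : ℕ} (φ : Euc d → ℝ) (ν : ℝ) : Euc d → ℝ :=
  fun x => ν ^ d * φ (ν • x)

/-- The location–scale class `P_φ`. -/
def locScaleClass {d : ℕ} (φ : Euc d → ℝ) : Set (Euc d → ℝ) :=
  {g | ∃ μ : Euc d, ∃ ν : ℝ, 0 < ν ∧ g = fun x => dilate φ ν (x - μ)}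

/-- The fixed-scale location class `P_{φ,ν}`. -/
def locClass {d : ℕ} (φ : Euc d → ℝ) (ν : ℝ) : Set (Euc d → ℝ) :=
  {g | ∃ μ : Euc d, g = fun x => dilate φ ν (x - μ)}

/-- `co_m(Q)`: convex combinations of `m` elements of `Q`. -/
def mixComb {d : ℕ} (Q : Set (Euc d → ℝ)) (m : ℕ) : Set (Euc d → ℝ) :=
  {f | ∃ (w : Fin m → ℝ) (g : Fin m → Euc d → ℝ),
    (∀ j, 0 ≤ w j) ∧ (∑ j, w j) = 1 ∧ (∀ j, g j ∈ Q) ∧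
    f = fun x => ∑ j, w j * g j x}

/-- `co(Q) = ⋃_m co_m(Q)`: all finite convex combinations of elements of `Q`. -/
def mix {d : ℕ} (Q : Set (Euc d → ℝ)) : Set (Euc d → ℝ) := ⋃ m, mixComb Q m

section Aux

variable {d : ℕ}

lemma dilate_measurable {φ : Euc d → ℝ} (hφ : Measurable φ) (ν : ℝ) :
    Measurable (dilate φ ν) :=
  measurable_const.mul (hφ.comp (measurable_const_smul ν))

lemma map_smul_volume {ν : ℝ} (hν : 0 < ν) :
    Measure.map (fun x : Euc d => ν • x) volume
      = ENNReal.ofReal ((ν ^ d)⁻¹) • volume := by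
  have h := Measure.map_addHaar_smul (volume : Measure (Euc d)) hν.ne'
  rw [finrank_euclideanSpace_fin] at h
  rw [show (fun x : Euc d => ν • x) = (ν • ·) from rfl, h,
    abs_of_pos (by positivity : (0:ℝ) < (ν ^ d)⁻¹)]

lemma lintegral_comp_smul' {f : Euc d → ℝ≥0∞} (hf : Measurable f) {ν : ℝ} (hν : 0 < ν) :
    ∫⁻ x, f (ν • x) = ENNReal.ofReal ((ν ^ d)⁻¹) * ∫⁻ x, f x := by
  calc ∫⁻ x, f (ν • x)
      = ∫⁻ x, f x ∂(Measure.map (fun x : Euc d => ν • x) volume) :=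
        (lintegral_map hf (measurable_const_smul ν)).symm
    _ = _ := by rw [map_smul_volume hν, lintegral_smul_measure, smul_eq_mul]

lemma dilate_lintegral {φ : Euc d → ℝ} (hφm : Measurable φ)
    (hφ1 : ∫⁻ x, ENNReal.ofReal (φ x) = 1) {ν : ℝ} (hν : 0 < ν) :
    ∫⁻ x, ENNReal.ofReal (dilate φ ν x) = 1 := by
  have hνd : (0:ℝ) < ν ^ d := pow_pos hν d
  calc ∫⁻ x, ENNReal.ofReal (dilate φ ν x)
      = ∫⁻ x, ENNReal.ofReal (ν ^ d) * ENNReal.ofReal (φ (ν • x)) := by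
        simp_rw [dilate, ENNReal.ofReal_mul hνd.le]
    _ = ENNReal.ofReal (ν ^ d) * ∫⁻ x, (fun y => ENNReal.ofReal (φ y)) (ν • x) :=
        lintegral_const_mul _ ((ENNReal.measurable_ofReal.comp hφm).comp (measurable_const_smul ν))
    _ = ENNReal.ofReal (ν ^ d) * (ENNReal.ofReal ((ν ^ d)⁻¹) * 1) := by
        rw [lintegral_comp_smul' (f := fun y => ENNReal.ofReal (φ y))
          (ENNReal.measurable_ofReal.comp hφm) hν, hφ1]
    _ = 1 := by
        rw [mul_one, ← ENNReal.ofReal_mul hνd.le, mul_inv_cancel₀ hνd.ne', ENNReal.ofReal_one]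

lemma dilate_memℒp {φ : Euc d → ℝ} (hφm : Measurable φ) {q : ℝ≥0∞}
    (hφp : MemLp φ q volume) (hq_top : q ≠ ∞) {ν : ℝ} (hν : 0 < ν) :
    MemLp (dilate φ ν) q volume := by
  have h1 : MemLp (fun x : Euc d => φ (ν • x)) q volume := by
    refine ⟨(hφm.comp (measurable_const_smul ν)).aestronglyMeasurable, ?_⟩
    have h2 : eLpNorm (φ ∘ (fun x : Euc d => ν • x)) q volume
        = eLpNorm φ q (Measure.map (fun x : Euc d => ν • x) volume) :=
      (eLpNorm_map_measure hφm.aestronglyMeasurable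
        (measurable_const_smul ν).aemeasurable).symm
    rw [show (fun x : Euc d => φ (ν • x)) = φ ∘ (fun x : Euc d => ν • x) from rfl, h2,
      map_smul_volume hν, eLpNorm_smul_measure_of_ne_top hq_top, smul_eq_mul]
    exact ENNReal.mul_lt_top
      (ENNReal.rpow_lt_top_of_nonneg ENNReal.toReal_nonneg ENNReal.ofReal_ne_top)
      hφp.2
  exact h1.const_mul (ν ^ d)

lemma Lp.coeFn_finsetSum {α E : Type*} [MeasurableSpace α] {μ : Measure α}
    [NormedAddCommGroup E] {p : ℝ≥0∞} {ι : Type*} (t : Finset ι) (F : ι → Lp E p μ) :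
    ⇑(∑ i ∈ t, F i) =ᵐ[μ] fun x => ∑ i ∈ t, F i x := by
  induction t using Finset.cons_induction with
  | empty => simp only [Finset.sum_empty]; exact Lp.coeFn_zero E p μ
  | cons i t hi ih =>
    simp only [Finset.sum_cons]
    filter_upwards [MeasureTheory.Lp.coeFn_add (F i) (∑ j ∈ t, F j), ih] with x h1 h2
    rw [h1, Pi.add_apply, h2]

lemma kernel_prod_integrable {k f₀ : Euc d → ℝ} (hk : Measurable k)
    (hk0 : ∀ x, 0 ≤ k x) (hk1 : ∫⁻ x, ENNReal.ofReal (k x) = 1)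
    (hf₀m : Measurable f₀) (hf₀0 : ∀ x, 0 ≤ f₀ x)
    (hf₀1 : ∫⁻ x, ENNReal.ofReal (f₀ x) = 1)
    (ρ : Measure (Euc d)) [SFinite ρ] (hρ : ρ ≤ volume) :
    Integrable (fun z : Euc d × Euc d => k (z.1 - z.2) * f₀ z.2) (ρ.prod volume) := by
  have hFm : Measurable (fun z : Euc d × Euc d => k (z.1 - z.2) * f₀ z.2) :=
    (hk.comp (measurable_fst.sub measurable_snd)).mul (hf₀m.comp measurable_snd)
  refine ⟨hFm.aestronglyMeasurable, ?_⟩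
  rw [hasFiniteIntegral_iff_ofReal (ae_of_all _ fun z => mul_nonneg (hk0 _) (hf₀0 _))]
  calc ∫⁻ z, ENNReal.ofReal (k (z.1 - z.2) * f₀ z.2) ∂(ρ.prod volume)
      = ∫⁻ z, ENNReal.ofReal (k (z.1 - z.2)) * ENNReal.ofReal (f₀ z.2) ∂(ρ.prod volume) := by
        simp_rw [ENNReal.ofReal_mul (hk0 _)]
    _ = ∫⁻ y, ∫⁻ x, ENNReal.ofReal (k (x - y)) * ENNReal.ofReal (f₀ y) ∂ρ ∂volume := by
        refine lintegral_prod_symm _ ?_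
        exact ((ENNReal.measurable_ofReal.comp (hk.comp (measurable_fst.sub measurable_snd))).mul
          (ENNReal.measurable_ofReal.comp (hf₀m.comp measurable_snd))).aemeasurable
    _ ≤ ∫⁻ y, ∫⁻ x, ENNReal.ofReal (k (x - y)) * ENNReal.ofReal (f₀ y) ∂volume ∂volume := by
        exact lintegral_mono fun y => lintegral_mono' hρ le_rfl
    _ = ∫⁻ y, ENNReal.ofReal (f₀ y) ∂volume := by
        refine lintegral_congr fun y => ?_
        rw [lintegral_mul_const (f := fun x => ENNReal.ofReal (k (x - y))) _
          (ENNReal.measurable_ofReal.comp (hk.comp (measurable_sub_const y)))]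
        rw [lintegral_sub_right_eq_self (fun x => ENNReal.ofReal (k x)) y, hk1, one_mul]
    _ = 1 := hf₀1
    _ < ∞ := one_lt_top

lemma kernel_prod_integrable' {k f₀ : Euc d → ℝ} (hk : Measurable k)
    (hk0 : ∀ x, 0 ≤ k x) (hk1 : ∫⁻ x, ENNReal.ofReal (k x) = 1)
    (hf₀m : Measurable f₀) (hf₀0 : ∀ x, 0 ≤ f₀ x)
    (hf₀1 : ∫⁻ x, ENNReal.ofReal (f₀ x) = 1)
    (ρ : Measure (Euc d)) [SFinite ρ] (hρ : ρ ≤ volume) :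
    Integrable (Function.uncurry fun μ0 x => k (x - μ0) * f₀ μ0) (volume.prod ρ) :=
  (kernel_prod_integrable hk hk0 hk1 hf₀m hf₀0 hf₀1 ρ hρ).swap

end Aux

section CLM
variable {α : Type*} [MeasurableSpace α] {μ : Measure α} {q : ℝ≥0∞} [Fact (1 ≤ q)]

lemma LpIntegrableOn (f : Lp ℝ q μ) {s : Set α} (hμs : μ s < ∞) :
    IntegrableOn (⇑f) s μ := by
  haveI : IsFiniteMeasure (μ.restrict s) := ⟨by rwa [Measure.restrict_apply_univ]⟩
  exact ((Lp.memLp f).restrict s).integrable Fact.out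

/-- Integration over a finite-measure set, as a continuous linear map on `Lp`. -/
def setIntegralCLM (s : Set α) (hμs : μ s < ∞) (hq_top : q ≠ ∞) :
    Lp ℝ q μ →L[ℝ] ℝ := by
  refine LinearMap.mkContinuous
    { toFun := fun f => ∫ x in s, f x ∂μ
      map_add' := fun f g => by
        rw [integral_congr_ae (ae_restrict_of_ae (Lp.coeFn_add f g))]
        exact integral_add (LpIntegrableOn f hμs) (LpIntegrableOn g hμs)
      map_smul' := fun c f => by
        rw [integral_congr_ae (ae_restrict_of_ae (Lp.coeFn_smul c f))]
        simpa using integral_smul c (⇑f) }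
    ((μ s) ^ (1 - 1/q.toReal)).toReal (fun f => ?_)
  have hq1 : (1:ℝ≥0∞) ≤ q := Fact.out
  have hq1R : (1:ℝ) ≤ q.toReal := by
    rw [← ENNReal.toReal_one]; exact ENNReal.toReal_mono hq_top hq1
  have hqpos : (0:ℝ) < q.toReal := lt_of_lt_of_le one_pos hq1R
  have hexp : (0:ℝ) ≤ 1 - 1/q.toReal := by
    have : 1/q.toReal ≤ 1 := by rw [div_le_one hqpos]; exact hq1R
    linarith
  have hfm := (Lp.aestronglyMeasurable f).restrict (s := s)
  have h1 : ‖∫ x in s, f x ∂μ‖ ≤ ∫ x in s, ‖f x‖ ∂μ := norm_integral_le_integral_norm _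
  have h2 : ∫ x in s, ‖f x‖ ∂μ = (eLpNorm (⇑f) 1 (μ.restrict s)).toReal := by
    rw [integral_norm_eq_lintegral_enorm hfm, eLpNorm_one_eq_lintegral_enorm]
  have h3 : eLpNorm (⇑f) 1 (μ.restrict s)
      ≤ eLpNorm (⇑f) q (μ.restrict s) * (μ.restrict s Set.univ) ^ (1/(1:ℝ≥0∞).toReal - 1/q.toReal) :=
    eLpNorm_le_eLpNorm_mul_rpow_measure_univ hq1 hfm
  rw [Measure.restrict_apply_univ, ENNReal.toReal_one, one_div_one] at h3
  have h4 : eLpNorm (⇑f) q (μ.restrict s) ≤ eLpNorm (⇑f) q μ :=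
    eLpNorm_mono_measure _ Measure.restrict_le_self
  have h5 : eLpNorm (⇑f) 1 (μ.restrict s)
      ≤ eLpNorm (⇑f) q μ * (μ s) ^ ((1:ℝ) - 1/q.toReal) :=
    h3.trans (mul_le_mul_left h4 _)
  have hB_ne : eLpNorm (⇑f) q μ * (μ s) ^ ((1:ℝ) - 1/q.toReal) ≠ ∞ :=
    ENNReal.mul_ne_top (Lp.eLpNorm_ne_top f) (ENNReal.rpow_ne_top_of_nonneg hexp hμs.ne)
  calc ‖∫ x in s, f x ∂μ‖ ≤ (eLpNorm (⇑f) 1 (μ.restrict s)).toReal := by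
        rw [h2] at h1; exact h1
    _ ≤ (eLpNorm (⇑f) q μ * (μ s) ^ ((1:ℝ) - 1/q.toReal)).toReal :=
        ENNReal.toReal_mono hB_ne h5
    _ = ((μ s) ^ (1 - 1/q.toReal)).toReal * ‖f‖ := by
        rw [ENNReal.toReal_mul, Lp.norm_def]; ring

lemma setIntegralCLM_apply (s : Set α) (hμs : μ s < ∞) (hq_top : q ≠ ∞) (f : Lp ℝ q μ) :
    setIntegralCLM s hμs hq_top f = ∫ x in s, f x ∂μ := rfl

end CLM

set_option maxHeartbeats 1000000 in
set_option synthInstance.maxHeartbeats 200000 in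
/-- For any fixed `ν > 0`, the convolution `φ_ν * f₀` lies in the `L^p`-closure of
`co(P_{φ,ν})`: for every `ε > 0` there is a finite mixture within `ε` in `L^p` norm. -/
theorem convolution_mem_closure_mixtures
    (d : ℕ) (hd : 1 ≤ d) (p : ℝ) (hp1 : 1 < p)
    (φ f₀ : Euc d → ℝ) (hφ : IsPDF φ) (hφp : MemLp φ (ENNReal.ofReal p) volume)
    (hf₀ : IsPDF f₀) (hf₀p : MemLp f₀ (ENNReal.ofReal p) volume)
    (ν : ℝ) (hν : 0 < ν) :
    ∀ ε : ℝ, 0 < ε →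
      ∃ g ∈ mix (locClass φ ν),
        eLpNorm (fun x => g x - ∫ y, dilate φ ν (x - y) * f₀ y)
            (ENNReal.ofReal p) volume
          ≤ ENNReal.ofReal ε := by
  intro ε hε
  obtain ⟨hφm, hφ0, hφ1⟩ := hφ
  obtain ⟨hf₀m, hf₀0, hf₀1⟩ := hf₀
  set q : ℝ≥0∞ := ENNReal.ofReal p with hq_def
  have hq1 : 1 ≤ q := by
    rw [hq_def, ← ENNReal.ofReal_one]; exact ENNReal.ofReal_le_ofReal hp1.le
  haveI : Fact (1 ≤ q) := ⟨hq1⟩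
  have hq_top : q ≠ ∞ := ENNReal.ofReal_ne_top
  set φν : Euc d → ℝ := dilate φ ν with hφν_def
  have hφνm : Measurable φν := dilate_measurable hφm ν
  have hφν0 : ∀ x, 0 ≤ φν x := fun x => mul_nonneg (by positivity) (hφ0 _)
  have hφν1 : ∫⁻ x, ENNReal.ofReal (φν x) = 1 := dilate_lintegral hφm hφ1 hν
  have hφνp : MemLp φν q volume := dilate_memℒp hφm hφp hq_top hν
  set Fν : Lp ℝ q volume := hφνp.toLp φν with hFν_def
  -- the translations, as a continuous family of measure-preserving continuous maps
  set T : Euc d → C(Euc d, Euc d) :=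
    fun μ0 => ⟨fun x => x - μ0, by fun_prop⟩ with hT_def
  have hTmp : ∀ μ0 : Euc d, MeasurePreserving (⇑(T μ0)) volume volume := fun μ0 =>
    measurePreserving_sub_right volume μ0
  set Φ : Euc d → Lp ℝ q volume := fun μ0 =>
    Lp.compMeasurePreserving (⇑(T μ0)) (hTmp μ0) Fν with hΦ_def
  have hTc : Continuous T := by
    refine ContinuousMap.continuous_of_continuous_uncurry _ ?_
    exact continuous_snd.sub continuous_fst
  have hΦc : Continuous Φ :=
    Continuous.compMeasurePreservingLp continuous_const hTc hTmp hq_top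
  have hΦcoe : ∀ μ0 : Euc d, ⇑(Φ μ0) =ᵐ[volume] fun x => φν (x - μ0) := by
    intro μ0
    refine (Lp.coeFn_compMeasurePreserving Fν (hTmp μ0)).trans ?_
    exact (hTmp μ0).quasiMeasurePreserving.ae_eq_comp (hφνp.coeFn_toLp)
  -- the mixing measure
  set η : Measure (Euc d) :=
    volume.withDensity (fun y => (Real.toNNReal (f₀ y) : ℝ≥0∞)) with hη_def
  have hdens : (fun y => (Real.toNNReal (f₀ y) : ℝ≥0∞))
      = fun y => ENNReal.ofReal (f₀ y) := rfl
  haveI : IsProbabilityMeasure η := ⟨by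
    rw [hη_def, hdens, withDensity_apply _ MeasurableSet.univ, setLIntegral_univ]
    exact hf₀1⟩
  haveI : SecondCountableTopologyEither (Euc d) (Lp ℝ q (volume : Measure (Euc d))) :=
    secondCountableTopologyEither_of_left (Euc d) (Lp ℝ q (volume : Measure (Euc d)))
  have hΦi : Integrable Φ η := by
    refine (integrable_const ‖Fν‖).mono' hΦc.aestronglyMeasurable ?_
    exact ae_of_all _ fun μ0 => le_of_eq (Lp.norm_compMeasurePreserving Fν (hTmp μ0))
  set I : Lp ℝ q volume := ∫ μ0, Φ μ0 ∂η with hI_def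
  have hImem : I ∈ closure (convexHull ℝ (Set.range Φ)) := by
    refine Convex.integral_mem ((convex_convexHull ℝ _).closure) isClosed_closure ?_ hΦi
    exact ae_of_all _ fun μ0 => subset_closure (subset_convexHull ℝ _ ⟨μ0, rfl⟩)
  have hconv_i : Integrable (fun x => ∫ y, φν (x - y) * f₀ y) volume :=
    (kernel_prod_integrable hφνm hφν0 hφν1 hf₀m hf₀0 hf₀1 volume le_rfl).integral_prod_left
  -- identification of the Bochner integral with the pointwise convolution
  have hI_ae : ⇑I =ᵐ[volume] fun x => ∫ y, φν (x - y) * f₀ y := by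
    refine ae_eq_of_forall_setIntegral_eq_of_sigmaFinite
      (fun t _ hμt => LpIntegrableOn I hμt)
      (fun t _ _ => hconv_i.integrableOn) ?_
    intro t ht hμt
    set L : Lp ℝ q volume →L[ℝ] ℝ := setIntegralCLM t hμt hq_top with hL_def
    have e2 : L I = ∫ μ0, L (Φ μ0) ∂η := (L.integral_comp_comm hΦi).symm
    have e3 : (fun μ0 : Euc d => L (Φ μ0)) = fun μ0 => ∫ x in t, φν (x - μ0) ∂volume := by
      funext μ0
      rw [hL_def, setIntegralCLM_apply]
      exact integral_congr_ae (ae_restrict_of_ae (hΦcoe μ0))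
    have hswap := integral_integral_swap
      (f := fun μ0 x => φν (x - μ0) * f₀ μ0)
      (kernel_prod_integrable' hφνm hφν0 hφν1 hf₀m hf₀0 hf₀1 (volume.restrict t)
        Measure.restrict_le_self)
    calc ∫ x in t, I x ∂volume = L I := (setIntegralCLM_apply t hμt hq_top I).symm
      _ = ∫ μ0, (∫ x in t, φν (x - μ0) ∂volume) ∂η := by rw [e2, e3]
      _ = ∫ μ0, Real.toNNReal (f₀ μ0) • (∫ x in t, φν (x - μ0) ∂volume) ∂volume := by
          rw [hη_def]
          exact integral_withDensity_eq_integral_smul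
            (measurable_real_toNNReal.comp hf₀m) _
      _ = ∫ μ0, ∫ x in t, φν (x - μ0) * f₀ μ0 ∂volume ∂volume := by
          refine integral_congr_ae (ae_of_all _ fun μ0 => ?_)
          dsimp only
          rw [NNReal.smul_def, Real.coe_toNNReal _ (hf₀0 μ0), smul_eq_mul, mul_comm, ← integral_mul_const]
      _ = ∫ x in t, (∫ μ0, φν (x - μ0) * f₀ μ0 ∂volume) ∂volume := hswap
      _ = ∫ x in t, (fun x => ∫ y, φν (x - y) * f₀ y) x ∂volume := rfl
  -- select a finite mixture close to `I`
  obtain ⟨h, hhmem, hdist⟩ := Metric.mem_closure_iff.mp hImem ε hε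
  obtain ⟨ι, hι, w, z, hw0, hw1, hz, hsum⟩ := mem_convexHull_iff_exists_fintype.mp hhmem
  letI := hι
  choose μs hμs using hz
  set e := Fintype.equivFin ι with he_def
  refine ⟨fun x => ∑ j : Fin (Fintype.card ι), w (e.symm j) * φν (x - μs (e.symm j)), ?_, ?_⟩
  · refine Set.mem_iUnion.mpr ⟨Fintype.card ι, ?_⟩
    refine ⟨fun j => w (e.symm j), fun j x => φν (x - μs (e.symm j)),
      fun j => hw0 _, ?_, fun j => ⟨μs (e.symm j), rfl⟩, rfl⟩
    rw [← hw1]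
    exact Equiv.sum_comp e.symm w
  · have hz_coe : ∀ᵐ x ∂(volume : Measure (Euc d)),
        ∀ i, (z i : Euc d → ℝ) x = φν (x - μs i) :=
      Filter.eventually_all.2 fun i => (hμs i ▸ hΦcoe (μs i))
    have hsmul_coe : ∀ᵐ x ∂(volume : Measure (Euc d)),
        ∀ i, ((w i • z i : Lp ℝ q volume) : Euc d → ℝ) x = w i * (z i : Euc d → ℝ) x :=
      Filter.eventually_all.2 fun i => by
        filter_upwards [Lp.coeFn_smul (w i) (z i)] with x hx
        rw [hx]; simp
    have hh_coe : ⇑h =ᵐ[volume]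
        fun x => ∑ j : Fin (Fintype.card ι), w (e.symm j) * φν (x - μs (e.symm j)) := by
      rw [← hsum]
      filter_upwards [Lp.coeFn_finsetSum Finset.univ (fun i => w i • z i),
        hz_coe, hsmul_coe] with x h1 h2 h3
      rw [h1]
      calc ∑ i, ((w i • z i : Lp ℝ q volume) : Euc d → ℝ) x
          = ∑ i, w i * φν (x - μs i) := by
            refine Finset.sum_congr rfl fun i _ => ?_
            rw [h3 i, h2 i]
        _ = _ := (Equiv.sum_comp e.symm fun i => w i * φν (x - μs i)).symm
    have hsub : (fun x => (∑ j : Fin (Fintype.card ι), w (e.symm j) * φν (x - μs (e.symm j)))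
          - ∫ y, φν (x - y) * f₀ y) =ᵐ[volume] ⇑(h - I) := by
      filter_upwards [Lp.coeFn_sub h I, hh_coe, hI_ae] with x h1 h2 h3
      rw [h1, Pi.sub_apply, h2, h3]
    rw [eLpNorm_congr_ae hsub]
    have hnorm : eLpNorm (⇑(h - I)) q volume = ENNReal.ofReal ‖h - I‖ := by
      rw [Lp.norm_def, ENNReal.ofReal_toReal (Lp.eLpNorm_ne_top (h - I))]
    rw [hnorm]
    refine ENNReal.ofReal_le_ofReal ?_
    rw [← dist_eq_norm, dist_comm]
    exact hdist.le
end
end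

section
/- Let d ≥ 1, p ∈ [1,∞), and let φ ∈ P and f₀ ∈ L^p ∩ P. Suppose there are finite constants α, K₁, K₂ > 0 such that ∫_{ℝ^d} ‖x‖₂^α φ(x) dx ≤ K₁ and, for every y ∈ ℝ^d, (∫_{ℝ^d} |f₀(x−y) − f₀(x)|^p dx)^{1/p} ≤ K₂ ‖y‖₂^α. Then for every ν > 0, ‖φ_ν * f₀ − f₀‖_p ≤ K₁ K₂ ν^{−α}, where φ_ν * f₀ denotes the convolution (φ_ν * f₀)(x) = ∫_{ℝ^d} φ_ν(x − y) f₀(y) dy. -/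
open MeasureTheory ENNReal

noncomputable section

lemma minkowski_lintegral {α β : Type*} [MeasurableSpace α] [MeasurableSpace β]
    (μ : Measure α) (ν : Measure β) [SigmaFinite μ] [SFinite ν] {p : ℝ} (hp : 1 ≤ p)
    {g : α → β → ℝ≥0∞} (hg : Measurable (Function.uncurry g)) :
    (∫⁻ x, (∫⁻ y, g x y ∂ν) ^ p ∂μ) ^ (1/p) ≤ ∫⁻ y, (∫⁻ x, g x y ^ p ∂μ) ^ (1/p) ∂ν := by
  have hp0 : (0:ℝ) < p := lt_of_lt_of_le one_pos hp
  rcases eq_or_lt_of_le hp with hpe | hlt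
  · subst hpe
    simp only [one_div, inv_one, ENNReal.rpow_one]
    rw [lintegral_lintegral_swap hg.aemeasurable]
  -- p > 1 case
  set q : ℝ := p.conjExponent with hq
  have hpq : p.HolderConjugate q := Real.HolderConjugate.conjExponent hlt
  have hG : Measurable (fun x => ∫⁻ y, g x y ∂ν) := hg.lintegral_prod_right
  set G : α → ℝ≥0∞ := fun x => ∫⁻ y, g x y ∂ν with hGdef
  set B : ℝ≥0∞ := ∫⁻ y, (∫⁻ x, g x y ^ p ∂μ) ^ (1/p) ∂ν with hB
  set Gn : ℕ → α → ℝ≥0∞ := fun n x => (spanningSets μ n).indicator (fun x => min (G x) n) x with hGn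
  have hGnmeas : ∀ n, Measurable (Gn n) := fun n =>
    ((hG.min measurable_const).indicator (measurableSet_spanningSets μ n))
  have hGnle : ∀ n x, Gn n x ≤ G x := by
    intro n x
    simp only [hGn]
    by_cases hx : x ∈ spanningSets μ n
    · rw [Set.indicator_of_mem hx]; exact min_le_left _ _
    · rw [Set.indicator_of_notMem hx]; exact zero_le
  have hGnmono : Monotone Gn := by
    intro m n hmn x
    simp only [hGn]
    by_cases hx : x ∈ spanningSets μ m
    · rw [Set.indicator_of_mem hx, Set.indicator_of_mem (monotone_spanningSets μ hmn hx)]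
      exact min_le_min le_rfl (Nat.cast_le.2 hmn)
    · rw [Set.indicator_of_notMem hx]; exact zero_le
  have hGnsup : ∀ x, (⨆ n, Gn n x) = G x := by
    intro x
    apply le_antisymm (iSup_le fun n => hGnle n x)
    obtain ⟨N, hN⟩ : ∃ N, x ∈ spanningSets μ N := by
      have := iUnion_spanningSets μ
      have hx : x ∈ ⋃ n, spanningSets μ n := by rw [this]; trivial
      exact Set.mem_iUnion.1 hx
    rcases eq_or_ne (G x) ⊤ with htop | hne
    · rw [htop]
      rw [top_le_iff, ← top_le_iff]
      calc (⊤ : ℝ≥0∞) = ⨆ n : ℕ, (n : ℝ≥0∞) := (iSup_natCast).symm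
        _ ≤ ⨆ n, Gn n x := by
            apply iSup_le
            intro n
            calc (n : ℝ≥0∞) ≤ Gn (max n N) x := by
                  simp only [hGn, Set.indicator_of_mem (monotone_spanningSets μ (le_max_right n N) hN), htop]
                  rw [min_eq_right le_top]
                  exact Nat.cast_le.2 (le_max_left n N)
              _ ≤ ⨆ n, Gn n x := le_iSup (fun n => Gn n x) _
    · obtain ⟨n, hn⟩ := ENNReal.exists_nat_gt hne
      calc G x = Gn (max n N) x := by
            simp only [hGn, Set.indicator_of_mem (monotone_spanningSets μ (le_max_right n N) hN)]
            rw [min_eq_left]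
            exact le_trans hn.le (Nat.cast_le.2 (le_max_left n N))
        _ ≤ ⨆ n, Gn n x := le_iSup (fun n => Gn n x) _
  set A : ℕ → ℝ≥0∞ := fun n => ∫⁻ x, Gn n x ^ p ∂μ with hA
  have hAfin : ∀ n, A n ≠ ⊤ := by
    intro n
    have hb : ∀ x, Gn n x ^ p ≤ (spanningSets μ n).indicator (fun _ => (n:ℝ≥0∞)^p) x := by
      intro x
      simp only [hGn]
      by_cases hx : x ∈ spanningSets μ n
      · rw [Set.indicator_of_mem hx, Set.indicator_of_mem hx]
        exact ENNReal.rpow_le_rpow (min_le_right _ _) hp0.le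
      · rw [Set.indicator_of_notMem hx, Set.indicator_of_notMem hx,
          ENNReal.zero_rpow_of_pos hp0]
    have : A n ≤ (n:ℝ≥0∞)^p * μ (spanningSets μ n) := by
      calc A n ≤ ∫⁻ x, (spanningSets μ n).indicator (fun _ => (n:ℝ≥0∞)^p) x ∂μ :=
            lintegral_mono hb
        _ = (n:ℝ≥0∞)^p * μ (spanningSets μ n) :=
            lintegral_indicator_const (measurableSet_spanningSets μ n) _
    exact ne_top_of_le_ne_top (ENNReal.mul_ne_top
      (ENNReal.rpow_ne_top_of_nonneg hp0.le (ENNReal.natCast_ne_top n))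
      (measure_spanningSets_lt_top μ n).ne) this
  have hGnp : ∀ n, Measurable (fun x => Gn n x ^ p) :=
    fun n => ENNReal.continuous_rpow_const.measurable.comp (hGnmeas n)
  have hGnp1 : ∀ n, Measurable (fun x => Gn n x ^ (p-1)) :=
    fun n => ENNReal.continuous_rpow_const.measurable.comp (hGnmeas n)
  have hinner : Measurable (fun y => (∫⁻ x, g x y ^ p ∂μ) ^ (1/p)) := by
    apply ENNReal.continuous_rpow_const.measurable.comp
    apply Measurable.lintegral_prod_right (f := fun y x => g x y ^ p)
    exact ENNReal.continuous_rpow_const.measurable.comp (hg.comp measurable_swap)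
  have key : ∀ n, A n ≤ A n ^ (1/q) * B := by
    intro n
    have h1 : A n ≤ ∫⁻ x, Gn n x ^ (p-1) * G x ∂μ := by
      apply lintegral_mono; intro x
      calc Gn n x ^ p = Gn n x ^ ((p-1)+1) := by rw [sub_add_cancel]
        _ = Gn n x ^ (p-1) * Gn n x ^ 1 :=
            ENNReal.rpow_add_of_nonneg _ _ (by linarith) zero_le_one
        _ = Gn n x ^ (p-1) * Gn n x := by rw [ENNReal.rpow_one]
        _ ≤ Gn n x ^ (p-1) * G x := mul_le_mul_right (hGnle n x) _
    have h2 : ∫⁻ x, Gn n x ^ (p-1) * G x ∂μ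
        = ∫⁻ y, ∫⁻ x, Gn n x ^ (p-1) * g x y ∂μ ∂ν := by
      rw [← lintegral_lintegral_swap]
      · exact lintegral_congr fun x => (lintegral_const_mul _ hg.of_uncurry_left).symm
      · exact ((ENNReal.continuous_rpow_const.measurable.comp
          ((hGnmeas n).comp measurable_fst)).mul hg).aemeasurable
    have h3 : ∀ y, ∫⁻ x, Gn n x ^ (p-1) * g x y ∂μ
        ≤ A n ^ (1/q) * (∫⁻ x, g x y ^ p ∂μ) ^ (1/p) := by
      intro y
      have := ENNReal.lintegral_mul_le_Lp_mul_Lq μ hpq.symm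
        (f := fun x => Gn n x ^ (p-1)) (g := fun x => g x y)
        (hGnp1 n).aemeasurable (hg.of_uncurry_right).aemeasurable
      simp only [Pi.mul_apply] at this
      calc ∫⁻ x, Gn n x ^ (p-1) * g x y ∂μ
          ≤ (∫⁻ x, (Gn n x ^ (p-1)) ^ q ∂μ) ^ (1/q)
            * (∫⁻ x, g x y ^ p ∂μ) ^ (1/p) := this
        _ = A n ^ (1/q) * (∫⁻ x, g x y ^ p ∂μ) ^ (1/p) := by
            congr 2
            apply lintegral_congr
            intro x
            rw [← ENNReal.rpow_mul, hpq.sub_one_mul_conj]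
    calc A n ≤ ∫⁻ y, ∫⁻ x, Gn n x ^ (p-1) * g x y ∂μ ∂ν := h2 ▸ h1
      _ ≤ ∫⁻ y, A n ^ (1/q) * (∫⁻ x, g x y ^ p ∂μ) ^ (1/p) ∂ν := lintegral_mono h3
      _ = A n ^ (1/q) * B := lintegral_const_mul _ hinner
  have hAB : ∀ n, A n ^ (1/p) ≤ B := by
    intro n
    rcases eq_or_ne (A n) 0 with h0 | h0
    · rw [h0, ENNReal.zero_rpow_of_pos (one_div_pos.2 hp0)]
      exact zero_le
    · have hfin := hAfin n
      have hbne : A n ^ (1/q) ≠ 0 :=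
        (ENNReal.rpow_pos (pos_iff_ne_zero.2 h0) hfin).ne'
      have hbnt : A n ^ (1/q) ≠ ⊤ :=
        ENNReal.rpow_ne_top_of_nonneg (one_div_nonneg.2 (Real.HolderTriple.pos hpq.symm).le) hfin
      have h1q : A n ^ (1/p) = A n / A n ^ (1/q) := by
        have : 1/p = 1 - 1/q := by
          have := hpq.inv_add_inv_eq_one
          rw [one_div, one_div]; linarith
        rw [this, ENNReal.rpow_sub 1 (1/q) h0 hfin, ENNReal.rpow_one]
      rw [h1q, ENNReal.div_le_iff_le_mul (Or.inl hbne) (Or.inl hbnt)]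
      calc A n ≤ A n ^ (1/q) * B := key n
        _ = B * A n ^ (1/q) := mul_comm _ _
  have hrpow_sup : ∀ (h : ℕ → ℝ≥0∞), Monotone h → (⨆ n, h n) ^ p = ⨆ n, h n ^ p := by
    intro h hm
    exact Monotone.map_iSup_of_continuousAt
      (ENNReal.continuous_rpow_const.continuousAt)
      (fun a b hab => ENNReal.rpow_le_rpow hab hp0.le)
      (by show (0:ℝ≥0∞) ^ p = 0; exact ENNReal.zero_rpow_of_pos hp0)
  have hsup : ∫⁻ x, G x ^ p ∂μ = ⨆ n, A n := by
    rw [← lintegral_iSup hGnp (fun m n hmn x => ENNReal.rpow_le_rpow (hGnmono hmn x) hp0.le)]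
    apply lintegral_congr
    intro x
    rw [← hGnsup x, hrpow_sup _ (fun m n hmn => hGnmono hmn x)]
  show (∫⁻ x, G x ^ p ∂μ) ^ (1/p) ≤ B
  rw [hsup]
  have hmonoA : Monotone A := fun m n hmn =>
    lintegral_mono fun x => ENNReal.rpow_le_rpow (hGnmono hmn x) hp0.le
  have : (⨆ n, A n) ^ (1/p) = ⨆ n, A n ^ (1/p) := by
    exact Monotone.map_iSup_of_continuousAt
      (ENNReal.continuous_rpow_const.continuousAt)
      (fun a b hab => ENNReal.rpow_le_rpow hab (one_div_pos.2 hp0).le)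
      (by show (0:ℝ≥0∞) ^ (1/p) = 0; exact ENNReal.zero_rpow_of_pos (one_div_pos.2 hp0))
  rw [this]
  exact iSup_le hAB


lemma lintegral_comp_smul_euc {d : ℕ} (f : Euc d → ℝ≥0∞) (hf : Measurable f) {ν : ℝ}
    (hν : 0 < ν) :
    ∫⁻ x, f (ν • x) = ENNReal.ofReal ((ν ^ d)⁻¹) * ∫⁻ x, f x := by
  have hmap := Measure.map_addHaar_smul (volume : Measure (Euc d)) hν.ne'
  rw [finrank_euclideanSpace_fin] at hmap
  have h1 : ∫⁻ x, f (ν • x) = ∫⁻ y, f y ∂(Measure.map (fun x : Euc d => ν • x) volume) :=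
    (lintegral_map hf (measurable_const_smul ν)).symm
  rw [h1, hmap, lintegral_smul_measure, abs_of_nonneg (inv_nonneg.2 (pow_nonneg hν.le d)), smul_eq_mul]

lemma lintegral_ofReal_dilate {d : ℕ} {φ : Euc d → ℝ} (hφm : Measurable φ)
    {ν : ℝ} (hν : 0 < ν) :
    ∫⁻ x, ENNReal.ofReal (dilate φ ν x) = ∫⁻ x, ENNReal.ofReal (φ x) := by
  have hpow : (0:ℝ) < ν ^ d := pow_pos hν d
  calc ∫⁻ x, ENNReal.ofReal (dilate φ ν x)
      = ∫⁻ x, ENNReal.ofReal (ν ^ d) * ENNReal.ofReal (φ (ν • x)) := by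
        simp_rw [dilate, ← ENNReal.ofReal_mul hpow.le]
    _ = ENNReal.ofReal (ν ^ d) * ∫⁻ x, ENNReal.ofReal (φ (ν • x)) :=
        lintegral_const_mul _
          ((hφm.comp (measurable_const_smul ν)).ennreal_ofReal)
    _ = ENNReal.ofReal (ν ^ d) * (ENNReal.ofReal ((ν ^ d)⁻¹) * ∫⁻ x, ENNReal.ofReal (φ x)) := by
        rw [lintegral_comp_smul_euc (fun x => ENNReal.ofReal (φ x)) hφm.ennreal_ofReal hν]
    _ = ∫⁻ x, ENNReal.ofReal (φ x) := by
        rw [← mul_assoc, ← ENNReal.ofReal_mul hpow.le, mul_inv_cancel₀ hpow.ne',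
          ENNReal.ofReal_one, one_mul]

lemma lintegral_moment_dilate {d : ℕ} {φ : Euc d → ℝ} (hφm : Measurable φ)
    {ν α : ℝ} (hν : 0 < ν) (hα : 0 ≤ α) :
    ∫⁻ y, ENNReal.ofReal (‖y‖ ^ α * dilate φ ν y)
      = ENNReal.ofReal (ν ^ (-α)) * ∫⁻ z, ENNReal.ofReal (‖z‖ ^ α * φ z) := by
  have hpow : (0:ℝ) < ν ^ d := pow_pos hν d
  have hνα : (0:ℝ) < ν ^ α := Real.rpow_pos_of_pos hν α
  have hνnα : (0:ℝ) ≤ ν ^ (-α) := (Real.rpow_pos_of_pos hν (-α)).le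
  have hFmeas : Measurable (fun z : Euc d => ENNReal.ofReal (‖z‖ ^ α * φ z)) :=
    ((((Real.continuous_rpow_const hα).measurable.comp measurable_norm)).mul hφm).ennreal_ofReal
  have key : ∀ y : Euc d, ENNReal.ofReal (‖y‖ ^ α * dilate φ ν y)
      = (ENNReal.ofReal (ν ^ (-α)) * ENNReal.ofReal (ν ^ d))
        * ENNReal.ofReal (‖ν • y‖ ^ α * φ (ν • y)) := by
    intro y
    rw [← ENNReal.ofReal_mul hνnα, ← ENNReal.ofReal_mul (by positivity)]
    congr 1
    have hny : ‖ν • y‖ = ν * ‖y‖ := by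
      rw [norm_smul, Real.norm_eq_abs, abs_of_pos hν]
    rw [hny, Real.mul_rpow hν.le (norm_nonneg y)]
    simp only [dilate]
    have h1 : ν ^ (-α) * ν ^ α = 1 := by
      rw [← Real.rpow_add hν]; simp
    linear_combination (-(‖y‖ ^ α * ν ^ d * φ (ν • y))) * h1
  calc ∫⁻ y, ENNReal.ofReal (‖y‖ ^ α * dilate φ ν y)
      = ∫⁻ y, (ENNReal.ofReal (ν ^ (-α)) * ENNReal.ofReal (ν ^ d))
          * ENNReal.ofReal (‖ν • y‖ ^ α * φ (ν • y)) := lintegral_congr key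
    _ = (ENNReal.ofReal (ν ^ (-α)) * ENNReal.ofReal (ν ^ d))
          * ∫⁻ y, ENNReal.ofReal (‖ν • y‖ ^ α * φ (ν • y)) :=
        lintegral_const_mul _ (hFmeas.comp (measurable_const_smul ν))
    _ = (ENNReal.ofReal (ν ^ (-α)) * ENNReal.ofReal (ν ^ d))
          * (ENNReal.ofReal ((ν ^ d)⁻¹) * ∫⁻ z, ENNReal.ofReal (‖z‖ ^ α * φ z)) := by
        rw [lintegral_comp_smul_euc _ hFmeas hν]
    _ = ENNReal.ofReal (ν ^ (-α)) * ∫⁻ z, ENNReal.ofReal (‖z‖ ^ α * φ z) := by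
        rw [mul_assoc, ← mul_assoc (ENNReal.ofReal (ν ^ d)), ← ENNReal.ofReal_mul hpow.le,
          mul_inv_cancel₀ hpow.ne', ENNReal.ofReal_one, one_mul]

/-- Bound on the smoothing error `‖φ_ν * f₀ − f₀‖_p ≤ K₁ K₂ ν^{−α}`
(Part 3 of the proof of Theorem 1). -/
theorem convolution_smoothing_error_le
    (d : ℕ) (hd : 1 ≤ d) (p α K₁ K₂ : ℝ) (hp1 : 1 ≤ p)
    (hα : 0 < α) (hK₁ : 0 < K₁) (hK₂ : 0 < K₂)
    (φ f₀ : Euc d → ℝ) (hφ : IsPDF φ)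
    (hf₀ : IsPDF f₀) (hf₀p : MemLp f₀ (ENNReal.ofReal p) volume)
    (hmom : ∫⁻ x, ENNReal.ofReal (‖x‖ ^ α * φ x) ≤ ENNReal.ofReal K₁)
    (hsmooth : ∀ y : Euc d,
      eLpNorm (fun x => f₀ (x - y) - f₀ x) (ENNReal.ofReal p) volume
        ≤ ENNReal.ofReal (K₂ * ‖y‖ ^ α)) :
    ∀ ν : ℝ, 0 < ν →
      eLpNorm (fun x => (∫ y, dilate φ ν (x - y) * f₀ y) - f₀ x)
          (ENNReal.ofReal p) volume
        ≤ ENNReal.ofReal (K₁ * K₂ * ν ^ (-α)) := by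
  intro ν hν
  obtain ⟨hφm, hφ0, hφ1⟩ := hφ
  obtain ⟨hf₀m, hf₀0, hf₀1⟩ := hf₀
  have hp0 : (0:ℝ) < p := lt_of_lt_of_le one_pos hp1
  set φt : Euc d → ℝ := dilate φ ν with hφt
  have hφtm : Measurable φt := (hφm.comp (measurable_const_smul ν)).const_mul _
  have hφt0 : ∀ x, 0 ≤ φt x := fun x => mul_nonneg (pow_nonneg hν.le d) (hφ0 _)
  have hφt1 : ∫⁻ x, ENNReal.ofReal (φt x) = 1 := by
    rw [hφt, lintegral_ofReal_dilate hφm hν, hφ1]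
  set P : ℝ≥0∞ := ENNReal.ofReal p with hP
  have hP0 : P ≠ 0 := by
    simp only [hP, Ne, ENNReal.ofReal_eq_zero, not_le]; linarith
  have hPt : P ≠ ⊤ := ENNReal.ofReal_ne_top
  have hPr : P.toReal = p := ENNReal.toReal_ofReal hp0.le
  -- Integrability of the dilated kernel
  have hφtInt : Integrable φt := by
    refine ⟨hφtm.aestronglyMeasurable, ?_⟩
    rw [hasFiniteIntegral_iff_ofReal (Filter.Eventually.of_forall hφt0), hφt1]
    exact one_lt_top
  have hφtint1 : ∫ y, φt y = 1 := by
    rw [integral_eq_lintegral_of_nonneg_ae (Filter.Eventually.of_forall hφt0)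
      hφtm.aestronglyMeasurable, hφt1, ENNReal.toReal_one]
  -- a.e. existence of the convolution integral
  have hprodmeas : Measurable (Function.uncurry fun x y : Euc d =>
      ENNReal.ofReal (φt y) * ENNReal.ofReal (f₀ (x - y))) := by
    exact ((hφtm.comp measurable_snd).ennreal_ofReal).mul
      ((hf₀m.comp (measurable_fst.sub measurable_snd)).ennreal_ofReal)
  have hconv : ∀ᵐ x, Integrable (fun y => φt y * f₀ (x - y)) := by
    have hfab : ∫⁻ x, ∫⁻ y, ENNReal.ofReal (φt y) * ENNReal.ofReal (f₀ (x - y)) = 1 := by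
      rw [lintegral_lintegral_swap hprodmeas.aemeasurable]
      have : ∀ y : Euc d, ∫⁻ x, ENNReal.ofReal (φt y) * ENNReal.ofReal (f₀ (x - y))
          = ENNReal.ofReal (φt y) := by
        intro y
        have hm1 : Measurable fun x : Euc d => ENNReal.ofReal (f₀ (x - y)) :=
          (hf₀m.comp (measurable_sub_const y)).ennreal_ofReal
        rw [lintegral_const_mul _ hm1]
        rw [lintegral_sub_right_eq_self (fun x => ENNReal.ofReal (f₀ x)) y, hf₀1, mul_one]
      simp_rw [this]
      exact hφt1
    have hmeasInner : Measurable (fun x : Euc d =>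
        ∫⁻ y, ENNReal.ofReal (φt y) * ENNReal.ofReal (f₀ (x - y))) :=
      Measurable.lintegral_prod_right hprodmeas
    have hae := ae_lt_top hmeasInner (by rw [hfab]; exact one_ne_top)
    filter_upwards [hae] with x hx
    refine ⟨((hφtm.mul (hf₀m.comp (measurable_const.sub measurable_id)))).aestronglyMeasurable, ?_⟩
    rw [hasFiniteIntegral_iff_ofReal (Filter.Eventually.of_forall
      (fun y => mul_nonneg (hφt0 y) (hf₀0 _)))]
    calc ∫⁻ y, ENNReal.ofReal (φt y * f₀ (x - y))
        = ∫⁻ y, ENNReal.ofReal (φt y) * ENNReal.ofReal (f₀ (x - y)) := by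
          simp_rw [ENNReal.ofReal_mul (hφt0 _)]
      _ < ⊤ := hx
  -- change of variables in the convolution
  have hswap : ∀ x : Euc d, (∫ y, φt (x - y) * f₀ y) = ∫ y, φt y * f₀ (x - y) := by
    intro x
    have h := integral_sub_left_eq_self (fun y => φt (x - y) * f₀ y) volume x
    simp only [_root_.sub_sub_cancel] at h
    exact h.symm
  -- a.e. pointwise bound on the difference
  have hbound : ∀ᵐ x, (↑‖(∫ y, φt (x - y) * f₀ y) - f₀ x‖₊ : ℝ≥0∞)
      ≤ ∫⁻ y, ENNReal.ofReal (φt y) * ↑‖f₀ (x - y) - f₀ x‖₊ := by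
    filter_upwards [hconv] with x hx
    rw [hswap x]
    have hsub : (∫ y, φt y * f₀ (x - y)) - f₀ x = ∫ y, φt y * (f₀ (x - y) - f₀ x) := by
      have : (fun y => φt y * (f₀ (x - y) - f₀ x))
          = fun y => φt y * f₀ (x - y) - φt y * f₀ x := by
        funext y; ring
      rw [this, integral_sub hx (hφtInt.mul_const _), integral_mul_const, hφtint1, one_mul]
    rw [hsub]
    calc (↑‖∫ y, φt y * (f₀ (x - y) - f₀ x)‖₊ : ℝ≥0∞)
        ≤ ∫⁻ y, ↑‖φt y * (f₀ (x - y) - f₀ x)‖₊ := enorm_integral_le_lintegral_enorm _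
      _ = ∫⁻ y, ENNReal.ofReal (φt y) * ↑‖f₀ (x - y) - f₀ x‖₊ := by
          apply lintegral_congr
          intro y
          rw [nnnorm_mul, ENNReal.coe_mul, ← enorm_eq_nnnorm, Real.enorm_eq_ofReal (hφt0 y)]
  -- the dominating kernel
  set g : Euc d → Euc d → ℝ≥0∞ :=
    fun x y => ENNReal.ofReal (φt y) * ↑‖f₀ (x - y) - f₀ x‖₊ with hgdef
  have hgmeas : Measurable (Function.uncurry g) := by
    refine Measurable.mul (f := fun q : Euc d × Euc d => ENNReal.ofReal (φt q.2))
      (g := fun q => (‖f₀ (q.1 - q.2) - f₀ q.1‖₊ : ℝ≥0∞)) ?_ ?_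
    · exact (hφtm.comp measurable_snd).ennreal_ofReal
    · exact measurable_coe_nnreal_ennreal.comp
        (((hf₀m.comp (measurable_fst.sub measurable_snd)).sub
          (hf₀m.comp measurable_fst)).nnnorm)
  have hdiffmeas : ∀ y : Euc d,
      Measurable (fun x => (↑‖f₀ (x - y) - f₀ x‖₊ : ℝ≥0∞) ^ p) :=
    fun y => ENNReal.continuous_rpow_const.measurable.comp
      (measurable_coe_nnreal_ennreal.comp
        (((hf₀m.comp (measurable_sub_const y)).sub hf₀m).nnnorm))
  have hφtmom : Measurable (fun y : Euc d => ENNReal.ofReal (‖y‖ ^ α * φt y)) :=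
    ((((Real.continuous_rpow_const hα.le).measurable.comp measurable_norm)).mul hφtm).ennreal_ofReal
  calc eLpNorm (fun x => (∫ y, dilate φ ν (x - y) * f₀ y) - f₀ x) P volume
      = (∫⁻ x, (↑‖(∫ y, φt (x - y) * f₀ y) - f₀ x‖₊ : ℝ≥0∞) ^ p) ^ (1/p) := by
        rw [eLpNorm_eq_lintegral_rpow_enorm_toReal hP0 hPt, hPr]; rfl
    _ ≤ (∫⁻ x, (∫⁻ y, g x y) ^ p) ^ (1/p) := by
        apply ENNReal.rpow_le_rpow _ (one_div_pos.2 hp0).le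
        apply lintegral_mono_ae
        filter_upwards [hbound] with x hx
        exact ENNReal.rpow_le_rpow hx hp0.le
    _ ≤ ∫⁻ y, (∫⁻ x, g x y ^ p) ^ (1/p) := minkowski_lintegral volume volume hp1 hgmeas
    _ = ∫⁻ y, ENNReal.ofReal (φt y) * eLpNorm (fun x => f₀ (x - y) - f₀ x) P volume := by
        apply lintegral_congr
        intro y
        rw [eLpNorm_eq_lintegral_rpow_enorm_toReal hP0 hPt, hPr]
        calc (∫⁻ x, (ENNReal.ofReal (φt y) * ↑‖f₀ (x - y) - f₀ x‖₊) ^ p) ^ (1/p)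
            = (ENNReal.ofReal (φt y) ^ p
                * ∫⁻ x, (↑‖f₀ (x - y) - f₀ x‖₊ : ℝ≥0∞) ^ p) ^ (1/p) := by
              simp_rw [ENNReal.mul_rpow_of_nonneg _ _ hp0.le]
              rw [lintegral_const_mul _ (hdiffmeas y)]
          _ = ENNReal.ofReal (φt y)
                * (∫⁻ x, (↑‖f₀ (x - y) - f₀ x‖₊ : ℝ≥0∞) ^ p) ^ (1/p) := by
              rw [ENNReal.mul_rpow_of_nonneg _ _ (one_div_pos.2 hp0).le,
                ← ENNReal.rpow_mul, mul_one_div_cancel hp0.ne', ENNReal.rpow_one]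
    _ ≤ ∫⁻ y, ENNReal.ofReal (φt y) * ENNReal.ofReal (K₂ * ‖y‖ ^ α) :=
        lintegral_mono fun y => mul_le_mul_right (hsmooth y) _
    _ = ENNReal.ofReal K₂ * ∫⁻ y, ENNReal.ofReal (‖y‖ ^ α * φt y) := by
        rw [← lintegral_const_mul _ hφtmom]
        apply lintegral_congr
        intro y
        rw [← ENNReal.ofReal_mul (hφt0 y), ← ENNReal.ofReal_mul hK₂.le]
        congr 1
        ring
    _ ≤ ENNReal.ofReal K₂ * (ENNReal.ofReal (ν ^ (-α)) * ENNReal.ofReal K₁) := by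
        apply mul_le_mul_right
        rw [hφt, lintegral_moment_dilate hφm hν hα.le]
        exact mul_le_mul_right hmom _
    _ = ENNReal.ofReal (K₁ * K₂ * ν ^ (-α)) := by
        rw [← ENNReal.ofReal_mul (Real.rpow_pos_of_pos hν (-α)).le,
          ← ENNReal.ofReal_mul hK₂.le]
        congr 1
        ring
end
end
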